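/- Let k be a positive integer, let F be a simple graph on m vertices that is not k-colourable, and let n ≥ m. Let G be a balanced blow-up of F on n vertices. Then any spanning subgraph of G obtained by deleting fewer than ⌊n/m⌋² edges is not k-colourable. -/

import Mathlib

open SimpleGraph

/-- The blow-up of a graph `F` in which each vertex `v` is replaced by an
independent set of size `s v`, and each edge by a complete bipartite graph. -/
def Blowup {α : Type*} (F : SimpleGraph α) (s : α → ℕ) :
    SimpleGraph (Σ v : α, Fin (s v)) where
  Adj x y := F.Adj x.1 y.1
  symm := ⟨fun _ _ h => F.adj_symm h⟩
  loopless := ⟨fun x h => F.loopless.irrefl x.1 h⟩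

section Aux

variable {α : Type*} [Fintype α] [DecidableEq α] {s : α → ℕ}

/-- Choice functions hitting both given blow-up vertices. -/
def badPair (a b : Σ v : α, Fin (s v)) : Finset (∀ v, Fin (s v)) :=
  Finset.univ.filter fun f => f a.1 = a.2 ∧ f b.1 = b.2

lemma badPair_comm (a b : Σ v : α, Fin (s v)) : badPair a b = badPair b a := by
  unfold badPair
  ext f
  simp [and_comm]

lemma badPair_card (a b : Σ v : α, Fin (s v)) (hab : a.1 ≠ b.1) :
    (badPair a b).card * (s a.1 * s b.1) ≤ ∏ v, s v := by
  classical
  have hinj : Function.Injective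
      (fun p : ↥(badPair a b) × Fin (s a.fst) × Fin (s b.fst) =>
        Function.update (Function.update (p.1 : ∀ v, Fin (s v)) a.fst p.2.1) b.fst p.2.2) := by
    rintro ⟨⟨f, hf⟩, i, j⟩ ⟨⟨g, hg⟩, i', j'⟩ h
    simp only [badPair, Finset.mem_filter, Finset.mem_univ, true_and] at hf hg
    have h1 : ∀ w, Function.update (Function.update f a.1 i) b.1 j w
        = Function.update (Function.update g a.1 i') b.1 j' w := fun w => congrFun h w
    have hj : j = j' := by simpa using h1 b.1
    have hi : i = i' := by
      have := h1 a.1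
      rwa [Function.update_of_ne hab, Function.update_of_ne hab,
        Function.update_self, Function.update_self] at this
    have hfg : f = g := by
      funext w
      by_cases hw1 : w = a.1
      · subst hw1; rw [hf.1, hg.1]
      · by_cases hw2 : w = b.1
        · subst hw2; rw [hf.2, hg.2]
        · have := h1 w
          rwa [Function.update_of_ne hw2, Function.update_of_ne hw2,
            Function.update_of_ne hw1, Function.update_of_ne hw1] at this
    subst hj; subst hi; subst hfg
    rfl
  have hcard := Fintype.card_le_of_injective _ hinj
  rw [Fintype.card_prod, Fintype.card_prod, Fintype.card_coe, Fintype.card_fin,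
    Fintype.card_fin, Fintype.card_pi] at hcard
  simpa [mul_assoc] using hcard

/-- `badPair` lifted to unordered pairs. -/
def badE : Sym2 (Σ v : α, Fin (s v)) → Finset (∀ v, Fin (s v)) :=
  Sym2.lift ⟨badPair, badPair_comm⟩

lemma badE_mk (a b : Σ v : α, Fin (s v)) : badE s(a, b) = badPair a b := rfl

end Aux

/-- If `F` on `m` vertices is not `k`-colourable and `G` is a balanced blow-up of `F` on
`n ≥ m` vertices, then any spanning subgraph of `G` obtained by deleting fewer than
`⌊n/m⌋ ^ 2` edges is not `k`-colourable. -/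
theorem statement4 {α : Type*} [Fintype α] (k : ℕ) (hk : 0 < k)
    (F : SimpleGraph α) (hF : ¬ F.Colorable k)
    (n : ℕ) (hn : Fintype.card α ≤ n)
    (s : α → ℕ) (hpos : ∀ v, 1 ≤ s v) (hsum : ∑ v, s v = n)
    (hbal : ∀ u v : α, s u ≤ s v + 1)
    (G' : SimpleGraph (Σ v : α, Fin (s v))) (hle : G' ≤ Blowup F s)
    (hdel : ((Blowup F s).edgeSet \ G'.edgeSet).ncard < (n / Fintype.card α) ^ 2) :
    ¬ G'.Colorable k := by
  classical
  intro hcol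
  obtain ⟨c⟩ := hcol
  have hne : Nonempty α := by
    by_contra h
    have : IsEmpty α := not_nonempty_iff.mp h
    exact hF ⟨SimpleGraph.Coloring.mk (fun v => isEmptyElim v)
      (fun {u v} h' => isEmptyElim u)⟩
  have hm : 0 < Fintype.card α := Fintype.card_pos
  set m := Fintype.card α with hmdef
  set t := n / m with htdef
  have ht : 1 ≤ t := (Nat.one_le_div_iff hm).2 hn
  -- every part has size at least t
  have hts : ∀ v, t ≤ s v := by
    intro v
    have h1 : n < (s v + 1) * m := by
      have h2 : ∑ u : α, s u < ∑ _u : α, (s v + 1) :=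
        Finset.sum_lt_sum (fun u _ => hbal u v)
          ⟨v, Finset.mem_univ v, Nat.lt_succ_self _⟩
      rw [hsum] at h2
      simpa [Finset.sum_const, Finset.card_univ, mul_comm] using h2
    have h3 : t < s v + 1 := (Nat.div_lt_iff_lt_mul hm).2 h1
    omega
  -- the finset of deleted edges
  have hfin : ((Blowup F s).edgeSet \ G'.edgeSet).Finite := Set.toFinite _
  set D := hfin.toFinset with hDdef
  have hDcard : D.card < t ^ 2 := by
    rwa [Set.ncard_eq_toFinset_card _ hfin] at hdel
  -- the bad choice functions
  set Bad : Finset (∀ v, Fin (s v)) := Finset.univ.filter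
    (fun f => ∃ a b : (Σ v, Fin (s v)),
      (Blowup F s).Adj a b ∧ ¬ G'.Adj a b ∧ f a.1 = a.2 ∧ f b.1 = b.2) with hBaddef
  have hsub : Bad ⊆ D.biUnion badE := by
    intro f hf
    rw [hBaddef, Finset.mem_filter] at hf
    obtain ⟨-, a, b, hadj, hnadj, h1, h2⟩ := hf
    refine Finset.mem_biUnion.2 ⟨s(a, b), ?_, ?_⟩
    · rw [hDdef, Set.Finite.mem_toFinset]
      exact ⟨(Blowup F s).mem_edgeSet.2 hadj,
        fun h => hnadj (G'.mem_edgeSet.1 h)⟩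
    · rw [badE_mk, badPair, Finset.mem_filter]
      exact ⟨Finset.mem_univ _, h1, h2⟩
  have hcard1 : ∀ e ∈ D, (badE e).card * t ^ 2 ≤ ∏ v, s v := by
    intro e
    induction e using Sym2.ind with
    | _ a b =>
      intro he
      rw [hDdef, Set.Finite.mem_toFinset] at he
      have hadj : (Blowup F s).Adj a b := (Blowup F s).mem_edgeSet.1 he.1
      have hab : a.1 ≠ b.1 := F.ne_of_adj hadj
      calc (badE s(a, b)).card * t ^ 2
          = (badPair a b).card * (t * t) := by rw [badE_mk, pow_two]
        _ ≤ (badPair a b).card * (s a.1 * s b.1) :=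
            Nat.mul_le_mul_left _ (Nat.mul_le_mul (hts _) (hts _))
        _ ≤ ∏ v, s v := badPair_card a b hab
  have hprodpos : 0 < ∏ v, s v := Finset.prod_pos (fun v _ => hpos v)
  have hBadcard : Bad.card < ∏ v, s v := by
    have h1 : Bad.card ≤ ∑ e ∈ D, (badE e).card :=
      le_trans (Finset.card_le_card hsub) Finset.card_biUnion_le
    have h2 : Bad.card * t ^ 2 ≤ D.card * (∏ v, s v) := by
      calc Bad.card * t ^ 2 ≤ (∑ e ∈ D, (badE e).card) * t ^ 2 :=
            Nat.mul_le_mul_right _ h1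
        _ = ∑ e ∈ D, (badE e).card * t ^ 2 := by rw [Finset.sum_mul]
        _ ≤ ∑ _e ∈ D, ∏ v, s v := Finset.sum_le_sum hcard1
        _ = D.card * ∏ v, s v := by rw [Finset.sum_const, smul_eq_mul]
    have h3 : D.card * (∏ v, s v) < t ^ 2 * (∏ v, s v) :=
      Nat.mul_lt_mul_of_lt_of_le hDcard le_rfl hprodpos
    by_contra hle
    push_neg at hle
    have h4 : (∏ v, s v) * t ^ 2 ≤ Bad.card * t ^ 2 := Nat.mul_le_mul_right _ hle
    have := lt_of_le_of_lt (le_trans h4 h2) h3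
    rw [mul_comm] at this
    exact lt_irrefl _ this
  have hex : ∃ f, f ∉ Bad := by
    by_contra h
    push_neg at h
    have huniv : Bad = Finset.univ := Finset.eq_univ_iff_forall.2 h
    rw [huniv, Finset.card_univ, Fintype.card_pi] at hBadcard
    simp only [Fintype.card_fin] at hBadcard
    exact lt_irrefl _ hBadcard
  obtain ⟨f, hf⟩ := hex
  apply hF
  refine ⟨SimpleGraph.Coloring.mk (fun v => c ⟨v, f v⟩) ?_⟩
  intro u v huv hcc
  have hadj : (Blowup F s).Adj ⟨u, f u⟩ ⟨v, f v⟩ := huv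
  by_cases hG : G'.Adj ⟨u, f u⟩ ⟨v, f v⟩
  · exact c.valid hG hcc
  · exact hf (Finset.mem_filter.2 ⟨Finset.mem_univ _,
      ⟨u, f u⟩, ⟨v, f v⟩, hadj, hG, rfl, rfl⟩)
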